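/- The family of matrices (E*_g · A_i · E*_h) indexed by the triples (g,h,i) ∈ E³ with (g,h,i) ∈ P is linearly independent over F and spans T as an F-vector space; in particular dim_F T = |P|. -/
import Mathlib


open scoped Classical

namespace GDScheme

variable {n : ℕ}

/-- The vertex set of the direct product of the group divisible schemes
`GD(ℓ i, m i)`. -/
abbrev Pt (ℓ m : Fin n → ℕ) : Type := ∀ i : Fin n, Fin (ℓ i) × Fin (m i)

/-- The index set `E` of the scheme: `n`-tuples with entries in `{0,1,2}`. -/
abbrev Lbl (n : ℕ) : Type := Fin n → Fin 3

/-- The relations of a single group divisible scheme. -/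
def rel1 {a b : ℕ} (j : Fin 3) (u v : Fin a × Fin b) : Prop :=
  if j = 0 then u = v
  else if j = 1 then u ≠ v ∧ u.1 = v.1
  else u.1 ≠ v.1

/-- The relation `R_g` of the direct product scheme. -/
def Rel (ℓ m : Fin n → ℕ) (g : Lbl n) (y z : Pt ℓ m) : Prop :=
  ∀ i : Fin n, rel1 (g i) (y i) (z i)

/-- The adjacency matrix `A_g`. -/
noncomputable def Amat (F : Type) [Field F] (ℓ m : Fin n → ℕ) (g : Lbl n) :
    Matrix (Pt ℓ m) (Pt ℓ m) F :=
  fun y z => if Rel ℓ m g y z then 1 else 0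

/-- The dual idempotent `E*_g` with respect to the base point `x`. -/
noncomputable def Estar (F : Type) [Field F] (ℓ m : Fin n → ℕ) (x : Pt ℓ m) (g : Lbl n) :
    Matrix (Pt ℓ m) (Pt ℓ m) F :=
  Matrix.diagonal fun y => if Rel ℓ m g x y then 1 else 0

/-- The Terwilliger `F`-algebra with respect to the base point `x`. -/
noncomputable def Talg (F : Type) [Field F] (ℓ m : Fin n → ℕ) (x : Pt ℓ m) :
    Subalgebra F (Matrix (Pt ℓ m) (Pt ℓ m) F) :=
  Algebra.adjoin F (Set.range (Amat F ℓ m) ∪ Set.range (Estar F ℓ m x))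

/-- `𝕘_j = {i : g i = j}`. -/
def lset (g : Lbl n) (j : Fin 3) : Finset (Fin n) :=
  Finset.univ.filter fun i => g i = j

/-- `V^• = {a ∈ V : ℓ a > 2}`. -/
def bullet (ℓ : Fin n → ℕ) (V : Finset (Fin n)) : Finset (Fin n) :=
  V.filter fun a => 2 < ℓ a

/-- `V^∘ = {a ∈ V : m a > 2}`. -/
def circ (m : Fin n → ℕ) (V : Finset (Fin n)) : Finset (Fin n) :=
  V.filter fun a => 2 < m a

/-- `(g, h, i) ∈ P`. -/
def MemP (ℓ m : Fin n → ℕ) (g h i : Lbl n) : Prop :=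
  (lset g 0 ∩ lset h 1 ∪ lset g 1 ∩ lset h 0) ⊆ lset i 1 ∧
  lset i 1 ⊆
    (lset g 0 ∩ lset h 1 ∪ lset g 1 ∩ lset h 0 ∪ circ m (lset g 1 ∩ lset h 1) ∪
      lset g 2 ∩ lset h 2) ∧
  ((lset g 2 \ lset h 2) ∪ (lset h 2 \ lset g 2)) ⊆ lset i 2 ∧
  lset i 2 ⊆ ((lset g 2 \ lset h 2) ∪ (lset h 2 \ lset g 2) ∪ bullet ℓ (lset g 2 ∩ lset h 2))

/-- Triples of subsets of `{1, …, n}`. -/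
abbrev Trip (n : ℕ) : Type := Finset (Fin n) × Finset (Fin n) × Finset (Fin n)

/-- `𝔠 ∈ U_{g,h}`. -/
def MemU (ℓ m : Fin n → ℕ) (g h : Lbl n) (c : Trip n) : Prop :=
  c.1 ⊆ circ m (lset g 1 ∩ lset h 1) ∧ c.2.1 ⊆ bullet ℓ (lset g 2 ∩ lset h 2) ∧
  c.2.1 ⊆ c.2.2 ∧ c.2.2 ⊆ lset g 2 ∩ lset h 2

/-- `a ∈ U_{g,h,𝔠}`. -/
def MemUc (ℓ m : Fin n → ℕ) (g h : Lbl n) (c : Trip n) (a : Lbl n) : Prop :=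
  MemP ℓ m g h a ∧
  lset a 1 ∩ circ m (lset g 1 ∩ lset h 1) ⊆ c.1 ∧
  lset a 2 ∩ bullet ℓ (lset g 2 ∩ lset h 2) ⊆ c.2.1 ∧
  lset a 1 ∩ (lset g 2 ∩ lset h 2) ⊆ c.2.2

/-- The matrix `B_{g,h,𝔠} = Σ_{a ∈ U_{g,h,𝔠}} E*_g A_a E*_h`. -/
noncomputable def Bmat (F : Type) [Field F] (ℓ m : Fin n → ℕ) (x : Pt ℓ m)
    (g h : Lbl n) (c : Trip n) : Matrix (Pt ℓ m) (Pt ℓ m) F :=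
  ∑ a ∈ Finset.univ.filter (fun a : Lbl n => MemUc ℓ m g h c a),
    Estar F ℓ m x g * Amat F ℓ m a * Estar F ℓ m x h

/-- `k_{(U,V,W)}`. -/
def kUVW (ℓ m : Fin n → ℕ) (U V W : Finset (Fin n)) : ℕ :=
  (∏ j ∈ U, (m j - 1)) * (∏ k ∈ V, (ℓ k - 1) * m k) * ∏ l ∈ W \ V, m l

/-- `k_𝔠` for a triple of sets `𝔠`. -/
def kTrip (ℓ m : Fin n → ℕ) (c : Trip n) : ℕ := kUVW ℓ m c.1 c.2.1 c.2.2

/-- `k_g` for `g ∈ E` (the valency of `R_g`). -/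
def kE (ℓ m : Fin n → ℕ) (g : Lbl n) : ℕ :=
  (∏ h ∈ lset g 1, (m h - 1)) * ∏ i ∈ lset g 2, (ℓ i - 1) * m i

/-- `k_{[g,h,i]}`. -/
def kBr (ℓ m : Fin n → ℕ) (g h i : Lbl n) : ℕ :=
  (∏ a ∈ lset h 1 \ (lset g 1 ∪ lset i 1), (m a - 1)) *
    ∏ a ∈ lset h 2 \ (lset g 2 ∪ lset i 2), (ℓ a - 1) * m a

/-- `𝔧 ∩ 𝔨` for triples of sets. -/
def interT (c d : Trip n) : Trip n := (c.1 ∩ d.1, c.2.1 ∩ d.2.1, c.2.2 ∩ d.2.2)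

/-- `𝔧 ∪ 𝔨` for triples of sets. -/
def unionT (c d : Trip n) : Trip n := (c.1 ∪ d.1, c.2.1 ∪ d.2.1, c.2.2 ∪ d.2.2)

/-- `𝔧 ∖ i` for a triple of sets `𝔧` and `i ∈ E`. -/
def sdiffT (c : Trip n) (i : Lbl n) : Trip n :=
  (c.1 \ lset i 1, c.2.1 \ lset i 2, c.2.2 \ lset i 2)

/-- `i ∩ 𝔧` for `i ∈ E` and a triple of sets `𝔧`. -/
def capT (i : Lbl n) (c : Trip n) : Trip n :=
  (lset i 1 ∩ c.1, lset i 2 ∩ c.2.1, lset i 2 ∩ c.2.2)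

/-- The triple `(g,h,i,𝔧,𝔨) ∈ U_{g,i}`. -/
def combT (ℓ m : Fin n → ℕ) (g h i : Lbl n) (j k : Trip n) : Trip n :=
  (circ m (lset g 1 ∩ lset i 1) \ lset h 1 ∪ lset g 1 ∩ lset i 1 ∩ (j.1 ∪ k.1),
   bullet ℓ (lset g 2 ∩ lset i 2) \ lset h 2 ∪ lset g 2 ∩ lset i 2 ∩ (j.2.1 ∪ k.2.1),
   (lset g 2 ∩ lset i 2) \ lset h 2 ∪ lset g 2 ∩ lset i 2 ∩ (j.2.2 ∪ k.2.2))

/-- The central elements `C_𝔥 = Σ_{i ∈ E} k_{𝔥∖i} • B_{i,i,i∩𝔥}`. -/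
noncomputable def Cmat (F : Type) [Field F] (ℓ m : Fin n → ℕ) (x : Pt ℓ m) (c : Trip n) :
    Matrix (Pt ℓ m) (Pt ℓ m) F :=
  ∑ i : Lbl n, (kTrip ℓ m (sdiffT c i) : F) • Bmat F ℓ m x i i (capT i c)

/-- Componentwise inclusion `⪯` of triples of sets. -/
def leT (c d : Trip n) : Prop := c.1 ⊆ d.1 ∧ c.2.1 ⊆ d.2.1 ∧ c.2.2 ⊆ d.2.2

/-- `|𝔠| = |S₁| + |S₂| + |S₃|`. -/
def cardT (c : Trip n) : ℕ := c.1.card + c.2.1.card + c.2.2.card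

/-- The triple `(g,h;𝔦)`. -/
def semiT (ℓ m : Fin n → ℕ) (g h : Lbl n) (c : Trip n) : Trip n :=
  (circ m (lset g 1 ∩ lset h 1), bullet ℓ c.2.2, lset g 2 ∩ lset h 2)

/-- The matrix `D_{g,h,𝔦}` (summing over all `𝔞 ∈ U_{g,h}` with `𝔦 ⪯ 𝔞 ⪯ (g,h;𝔦)` and `k_𝔞`
nonvanishing, with sign `(-1)^(|𝔞|-|𝔦|)`; this combines the double sum over
`j` and `𝔨 ∈ U_{g,h,𝔦,j}`). -/
noncomputable def Dmat (F : Type) [Field F] (ℓ m : Fin n → ℕ) (x : Pt ℓ m)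
    (g h : Lbl n) (c : Trip n) : Matrix (Pt ℓ m) (Pt ℓ m) F :=
  ∑ a ∈ Finset.univ.filter (fun a : Trip n =>
      MemU ℓ m g h a ∧ leT c a ∧ leT a (semiT ℓ m g h c) ∧ (kTrip ℓ m a : F) ≠ 0),
    ((-1 : F) ^ (cardT a - cardT c) * (kBr ℓ m g h g : F)⁻¹ * (kTrip ℓ m a : F)⁻¹) •
      Bmat F ℓ m x g h a

/-- Every product of `h` elements of `S` vanishes. -/
def ProdZero {α : Type} [Ring α] (S : Set α) (h : ℕ) : Prop :=
  ∀ f : Fin h → α, (∀ i, f i ∈ S) → (List.ofFn f).prod = 0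

/-- The corner `E*_g T E*_g` as a set of matrices. -/
def CornerSet (F : Type) [Field F] (ℓ m : Fin n → ℕ) (x : Pt ℓ m) (g : Lbl n) :
    Set (Matrix (Pt ℓ m) (Pt ℓ m) F) :=
  {N | ∃ M ∈ Talg F ℓ m x, N = Estar F ℓ m x g * M * Estar F ℓ m x g}

/-- The center `Z(T)` as a set of matrices. -/
def CenterSet (F : Type) [Field F] (ℓ m : Fin n → ℕ) (x : Pt ℓ m) :
    Set (Matrix (Pt ℓ m) (Pt ℓ m) F) :=
  {M | M ∈ Talg F ℓ m x ∧ ∀ N ∈ Talg F ℓ m x, M * N = N * M}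

/-- The Jacobson radical of `T`, defined (as in the paper, for a finite-dimensional
algebra) as the largest nilpotent two-sided ideal, i.e. the sup of all nilpotent
two-sided ideals of `T`. -/
noncomputable def RadT (F : Type) [Field F] (ℓ m : Fin n → ℕ) (x : Pt ℓ m) :
    Submodule F (Matrix (Pt ℓ m) (Pt ℓ m) F) :=
  sSup {J | (J : Set (Matrix (Pt ℓ m) (Pt ℓ m) F)) ⊆ (Talg F ℓ m x : Set _) ∧
    (∀ a ∈ J, ∀ t ∈ Talg F ℓ m x, a * t ∈ J ∧ t * a ∈ J) ∧
    ∃ h, ProdZero (J : Set (Matrix (Pt ℓ m) (Pt ℓ m) F)) h}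

/-- `(g, h, 𝔠) ∈ 𝔻`. -/
def MemD (F : Type) [Field F] (ℓ m : Fin n → ℕ) (t : Lbl n × Lbl n × Trip n) : Prop :=
  MemU ℓ m t.1 t.2.1 t.2.2 ∧
    ((kBr ℓ m t.1 t.2.1 t.1 * kBr ℓ m t.2.1 t.1 t.2.1 * kTrip ℓ m t.2.2 : ℕ) : F) ≠ 0

/-- The invariant classifying the equivalence `∼` on `𝔻`. -/
def keyD (ℓ m : Fin n → ℕ) (t : Lbl n × Lbl n × Trip n) : Trip n :=
  (circ m (lset t.1 1 ∩ lset t.2.1 1) \ t.2.2.1,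
   bullet ℓ (lset t.1 2 ∩ lset t.2.1 2) \ t.2.2.2.1,
   (lset t.1 2 ∩ lset t.2.1 2) \ t.2.2.2.2)

/-- The equivalence relation `∼` on `𝔻`. -/
def DSetoid (F : Type) [Field F] (ℓ m : Fin n → ℕ) : Setoid {t : Lbl n × Lbl n × Trip n // MemD F ℓ m t} :=
  ⟨fun s t => keyD ℓ m s.1 = keyD ℓ m t.1, ⟨fun _ => rfl, Eq.symm, Eq.trans⟩⟩

/-- The set of `∼`-equivalence classes of `𝔻`. -/
def ClassIdx (F : Type) [Field F] (ℓ m : Fin n → ℕ) : Type :=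
  Quotient (DSetoid F ℓ m)

/-- `|𝔻(c)|` for an equivalence class `c`. -/
noncomputable def dClass (F : Type) [Field F] (ℓ m : Fin n → ℕ) (c : ClassIdx F ℓ m) : ℕ :=
  Nat.card {a : Lbl n // ∃ (b : Trip n) (hb : MemD F ℓ m (a, a, b)),
    Quotient.mk (DSetoid F ℓ m) ⟨(a, a, b), hb⟩ = c}


section Aux

/-- classification of a pair in a single GD scheme -/
def cls {a b : ℕ} (u v : Fin a × Fin b) : Fin 3 :=
  if u = v then 0 else if u.1 = v.1 then 1 else 2

lemma cls_eq_zero {a b : ℕ} {u v : Fin a × Fin b} : cls u v = 0 ↔ u = v := by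
  unfold cls; split_ifs <;> simp_all

lemma cls_eq_one {a b : ℕ} {u v : Fin a × Fin b} : cls u v = 1 ↔ u ≠ v ∧ u.1 = v.1 := by
  unfold cls; split_ifs <;> simp_all

lemma cls_eq_two {a b : ℕ} {u v : Fin a × Fin b} : cls u v = 2 ↔ u.1 ≠ v.1 := by
  unfold cls
  split_ifs with h1 h2 <;> simp_all

lemma cls_symm {a b : ℕ} (u v : Fin a × Fin b) : cls u v = cls v u := by
  unfold cls
  split_ifs <;> simp_all

lemma rel1_iff {a b : ℕ} (j : Fin 3) (u v : Fin a × Fin b) : rel1 j u v ↔ cls u v = j := by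
  unfold rel1
  fin_cases j
  · simp [cls_eq_zero, eq_comm]
  · simp [cls_eq_one]
  · simp [cls_eq_two]

variable {n : ℕ} {ℓ m : Fin n → ℕ}

/-- the relation of a pair of points -/
def relOf (y z : Pt ℓ m) : Lbl n := fun i => cls (y i) (z i)

lemma Rel_iff {g : Lbl n} {y z : Pt ℓ m} : Rel ℓ m g y z ↔ relOf y z = g := by
  unfold Rel relOf
  rw [funext_iff]
  exact forall_congr' fun i => by rw [rel1_iff, eq_comm]

lemma relOf_symm (y z : Pt ℓ m) : relOf y z = relOf z y := by
  funext i; exact cls_symm _ _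

variable {F : Type} [Field F]

lemma entry_eq (x : Pt ℓ m) (g h i : Lbl n) (y z : Pt ℓ m) :
    (Estar F ℓ m x g * Amat F ℓ m i * Estar F ℓ m x h) y z =
      if relOf x y = g ∧ relOf y z = i ∧ relOf x z = h then 1 else 0 := by
  unfold Estar
  rw [Matrix.mul_diagonal, Matrix.diagonal_mul]
  unfold Amat
  simp only [Rel_iff]
  split_ifs <;> simp_all

end Aux
section Aux2
variable {n : ℕ} {ℓ m : Fin n → ℕ}

lemma fin3 (j : Fin 3) : j = 0 ∨ j = 1 ∨ j = 2 := by fin_cases j <;> simp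

/-- pointwise form of the `MemP` condition -/
def Lok (l mm : ℕ) (g h i : Fin 3) : Prop :=
  ((g = 0 ∧ h = 1) ∨ (g = 1 ∧ h = 0) → i = 1) ∧
  (i = 1 → (g = 0 ∧ h = 1) ∨ (g = 1 ∧ h = 0) ∨ (g = 1 ∧ h = 1 ∧ 2 < mm) ∨ (g = 2 ∧ h = 2)) ∧
  ((g = 2 ∧ ¬h = 2) ∨ (h = 2 ∧ ¬g = 2) → i = 2) ∧
  (i = 2 → (g = 2 ∧ ¬h = 2) ∨ (h = 2 ∧ ¬g = 2) ∨ (g = 2 ∧ h = 2 ∧ 2 < l))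

set_option maxHeartbeats 1000000 in
lemma memP_iff {g h i : Lbl n} :
    MemP ℓ m g h i ↔ ∀ a, Lok (ℓ a) (m a) (g a) (h a) (i a) := by
  unfold MemP Lok lset circ bullet
  simp only [Finset.subset_iff, Finset.mem_union, Finset.mem_inter, Finset.mem_sdiff,
    Finset.mem_filter, Finset.mem_univ, true_and]
  rw [← forall_and, ← forall_and, ← forall_and]
  refine forall_congr' fun a => ?_
  refine and_congr (by tauto) (and_congr (by tauto) (and_congr (by tauto) (by tauto)))

lemma exists_ne_fin {k : ℕ} (hk : 2 ≤ k) (u : Fin k) : ∃ v : Fin k, v ≠ u := by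
  haveI : Nontrivial (Fin k) := by
    rw [Fin.nontrivial_iff_two_le]; exact hk
  exact exists_ne u

lemma exists_third {k : ℕ} (hk : 2 < k) (u v : Fin k) : ∃ w : Fin k, w ≠ u ∧ w ≠ v := by
  by_contra hc
  push_neg at hc
  have hsub : (Finset.univ : Finset (Fin k)) ⊆ {u, v} := by
    intro w _
    simp only [Finset.mem_insert, Finset.mem_singleton]
    by_cases hw : w = u
    · exact Or.inl hw
    · exact Or.inr (hc w hw)
  have h1 := Finset.card_le_card hsub
  have h2 : ({u, v} : Finset (Fin k)).card ≤ 2 := by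
    apply le_trans (Finset.card_insert_le _ _)
    simp
  simp only [Finset.card_univ, Fintype.card_fin] at h1
  omega

lemma two_lt_of_three {k : ℕ} {a b c : Fin k} (hab : a ≠ b) (hac : a ≠ c) (hbc : b ≠ c) :
    2 < k := by
  have := Fintype.two_lt_card_iff.mpr ⟨a, b, c, hab, hac, hbc⟩
  simpa using this

lemma snd_ne {l mm : ℕ} {u v : Fin l × Fin mm} (h1 : u ≠ v) (h2 : u.1 = v.1) : u.2 ≠ v.2 := by
  intro h; exact h1 (Prod.ext h2 h)

lemma lok_of_cls {l mm : ℕ} (u v w : Fin l × Fin mm) :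
    Lok l mm (cls u v) (cls u w) (cls v w) := by
  refine ⟨?_, ?_, ?_, ?_⟩
  · rintro (⟨h1, h2⟩ | ⟨h1, h2⟩)
    · rw [cls_eq_zero] at h1; subst h1; exact h2
    · rw [cls_eq_zero] at h2; subst h2; rw [cls_symm]; exact h1
  · intro hi
    have hi' := cls_eq_one.mp hi
    rcases fin3 (cls u v) with hg | hg | hg <;> rcases fin3 (cls u w) with hh | hh | hh
    · exact absurd ((cls_eq_zero.mp hg).symm.trans (cls_eq_zero.mp hh)) hi'.1
    · exact Or.inl ⟨hg, hh⟩
    · exact absurd (by rw [← cls_eq_zero.mp hg] at hi'; exact hi'.2) (cls_eq_two.mp hh)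
    · exact Or.inr (Or.inl ⟨hg, hh⟩)
    · refine Or.inr (Or.inr (Or.inl ⟨hg, hh, ?_⟩))
      have g2 := cls_eq_one.mp hg; have h2 := cls_eq_one.mp hh
      exact two_lt_of_three (snd_ne g2.1 g2.2) (snd_ne h2.1 h2.2) (snd_ne hi'.1 hi'.2)
    · exact absurd ((cls_eq_one.mp hg).2.trans hi'.2) (cls_eq_two.mp hh)
    · exact absurd (by rw [cls_eq_zero.mp hh]; exact hi'.2.symm) (cls_eq_two.mp hg)
    · exact absurd ((cls_eq_one.mp hh).2.trans hi'.2.symm) (cls_eq_two.mp hg)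
    · exact Or.inr (Or.inr (Or.inr ⟨hg, hh⟩))
  · rintro (⟨h1, h2⟩ | ⟨h1, h2⟩)
    · rw [cls_eq_two] at h1 ⊢
      have hw : u.1 = w.1 := by
        rcases fin3 (cls u w) with hh | hh | hh
        · rw [cls_eq_zero.mp hh]
        · exact (cls_eq_one.mp hh).2
        · exact absurd hh h2
      intro hvw; exact h1 (hw.trans hvw.symm)
    · rw [cls_eq_two] at h1 ⊢
      have hv : u.1 = v.1 := by
        rcases fin3 (cls u v) with hh | hh | hh
        · rw [cls_eq_zero.mp hh]
        · exact (cls_eq_one.mp hh).2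
        · exact absurd hh h2
      intro hvw; exact h1 (hv.trans hvw)
  · intro hi
    have hi' := cls_eq_two.mp hi
    by_cases hg : cls u v = 2 <;> by_cases hh : cls u w = 2
    · refine Or.inr (Or.inr ⟨hg, hh, ?_⟩)
      exact two_lt_of_three (cls_eq_two.mp hg) (cls_eq_two.mp hh) hi'
    · exact Or.inl ⟨hg, hh⟩
    · exact Or.inr (Or.inl ⟨hh, hg⟩)
    · exfalso
      have h1 : u.1 = v.1 := by
        rcases fin3 (cls u v) with h' | h' | h'
        · rw [cls_eq_zero.mp h']
        · exact (cls_eq_one.mp h').2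
        · exact absurd h' hg
      have h2 : u.1 = w.1 := by
        rcases fin3 (cls u w) with h' | h' | h'
        · rw [cls_eq_zero.mp h']
        · exact (cls_eq_one.mp h').2
        · exact absurd h' hh
      exact hi' (h1.symm.trans h2)

end Aux2
section Aux3
variable {n : ℕ} {ℓ m : Fin n → ℕ}

lemma cls_self {a b : ℕ} (u : Fin a × Fin b) : cls u u = 0 := cls_eq_zero.mpr rfl

lemma cls_realize {l mm : ℕ} (hl : 2 ≤ l) (hmm : 2 ≤ mm) (u : Fin l × Fin mm) {g h i : Fin 3}
    (hk : Lok l mm g h i) : ∃ v w, cls u v = g ∧ cls u w = h ∧ cls v w = i := by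
  obtain ⟨a, ha⟩ := exists_ne_fin hl u.1
  obtain ⟨b, hb⟩ := exists_ne_fin hmm u.2
  have c1 : cls u (u.1, b) = 1 := cls_eq_one.mpr ⟨fun e => hb (congrArg Prod.snd e).symm, rfl⟩
  have c2 : cls u (a, u.2) = 2 := cls_eq_two.mpr (fun e => ha e.symm)
  have real1 : ∀ j : Fin 3, ∃ v : Fin l × Fin mm, cls u v = j := by
    intro j
    rcases fin3 j with rfl | rfl | rfl
    · exact ⟨u, cls_self u⟩
    · exact ⟨_, c1⟩
    · exact ⟨_, c2⟩
  obtain ⟨k1, k2, k3, k4⟩ := hk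
  rcases fin3 g with rfl | rfl | rfl <;> rcases fin3 h with rfl | rfl | rfl
  · -- g = 0, h = 0 : i = 0
    have : i = 0 := by
      rcases fin3 i with rfl | hi | hi
      · rfl
      · rcases k2 hi with ⟨_, e⟩ | ⟨e, _⟩ | ⟨e, _⟩ | ⟨e, _⟩ <;> exact absurd e (by decide)
      · rcases k4 hi with ⟨e, _⟩ | ⟨e, _⟩ | ⟨e, _⟩ <;> exact absurd e (by decide)
    subst this
    exact ⟨u, u, cls_self u, cls_self u, cls_self u⟩
  · -- g = 0, h = 1 : i = 1
    have : i = 1 := k1 (Or.inl ⟨rfl, rfl⟩)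
    subst this
    exact ⟨u, (u.1, b), cls_self u, c1, c1⟩
  · -- g = 0, h = 2 : i = 2
    have : i = 2 := k3 (Or.inr ⟨rfl, by decide⟩)
    subst this
    exact ⟨u, (a, u.2), cls_self u, c2, c2⟩
  · -- g = 1, h = 0 : i = 1
    have : i = 1 := k1 (Or.inr ⟨rfl, rfl⟩)
    subst this
    exact ⟨(u.1, b), u, c1, cls_self u, by rw [cls_symm]; exact c1⟩
  · -- g = 1, h = 1 : i = 0 or (i = 1 with 2 < mm)
    rcases fin3 i with rfl | hi | hi
    · exact ⟨(u.1, b), (u.1, b), c1, c1, cls_self _⟩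
    · have hmm' : 2 < mm := by
        rcases k2 hi with ⟨e, _⟩ | ⟨_, e⟩ | ⟨_, _, e⟩ | ⟨e, _⟩
        · exact absurd e (by decide)
        · exact absurd e (by decide)
        · exact e
        · exact absurd e (by decide)
      obtain ⟨c, hc1, hc2⟩ := exists_third hmm' u.2 b
      subst hi
      refine ⟨(u.1, b), (u.1, c), c1, cls_eq_one.mpr ⟨fun e => hc1 (congrArg Prod.snd e).symm, rfl⟩,
        cls_eq_one.mpr ⟨fun e => hc2 (congrArg Prod.snd e).symm, rfl⟩⟩
    · rcases k4 hi with ⟨e, _⟩ | ⟨e, _⟩ | ⟨e, _⟩ <;> exact absurd e (by decide)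
  · -- g = 1, h = 2 : i = 2
    have : i = 2 := k3 (Or.inr ⟨rfl, by decide⟩)
    subst this
    exact ⟨(u.1, b), (a, u.2), c1, c2, cls_eq_two.mpr (fun e => ha e.symm)⟩
  · -- g = 2, h = 0 : i = 2
    have : i = 2 := k3 (Or.inl ⟨rfl, by decide⟩)
    subst this
    exact ⟨(a, u.2), u, c2, cls_self u, by rw [cls_symm]; exact c2⟩
  · -- g = 2, h = 1 : i = 2
    have : i = 2 := k3 (Or.inl ⟨rfl, by decide⟩)
    subst this
    exact ⟨(a, u.2), (u.1, b), c2, c1, cls_eq_two.mpr ha⟩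
  · -- g = 2, h = 2 : i = 0, 1, or (2 with 2 < l)
    rcases fin3 i with rfl | hi | hi
    · exact ⟨(a, u.2), (a, u.2), c2, c2, cls_self _⟩
    · subst hi
      exact ⟨(a, u.2), (a, b), c2, cls_eq_two.mpr (fun e => ha e.symm),
        cls_eq_one.mpr ⟨fun e => hb (congrArg Prod.snd e).symm, rfl⟩⟩
    · have hll : 2 < l := by
        rcases k4 hi with ⟨_, e⟩ | ⟨_, e⟩ | ⟨_, _, e⟩
        · exact absurd rfl e
        · exact absurd rfl e
        · exact e
      obtain ⟨c, hc1, hc2⟩ := exists_third hll u.1 a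
      subst hi
      exact ⟨(a, u.2), (c, u.2), c2, cls_eq_two.mpr (fun e => hc1 e.symm),
        cls_eq_two.mpr (fun e => hc2 e.symm)⟩

lemma memP_iff_exists (hℓ : ∀ a, 2 ≤ ℓ a) (hm : ∀ a, 2 ≤ m a) (x : Pt ℓ m) {g h i : Lbl n} :
    MemP ℓ m g h i ↔ ∃ y z : Pt ℓ m, relOf x y = g ∧ relOf x z = h ∧ relOf y z = i := by
  rw [memP_iff]
  constructor
  · intro hk
    choose v w hv hw hvw using fun a => cls_realize (hℓ a) (hm a) (x a) (hk a)
    exact ⟨v, w, funext hv, funext hw, funext hvw⟩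
  · rintro ⟨y, z, rfl, rfl, rfl⟩ a
    exact lok_of_cls (x a) (y a) (z a)

end Aux3
section Aux4

open Equiv

lemma exists_perm_extend {α : Type} [DecidableEq α] (s : Finset α) (f : α → α)
    (hf : Set.InjOn f s) : ∃ π : Equiv.Perm α, ∀ a ∈ s, π a = f a := by
  classical
  induction s using Finset.induction_on with
  | empty => exact ⟨1, by simp⟩
  | @insert a s ha ih =>
    obtain ⟨π, hπ⟩ := ih (hf.mono (Finset.coe_subset.mpr (Finset.subset_insert a s)))
    refine ⟨Equiv.swap (π a) (f a) * π, ?_⟩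
    intro b hb
    rcases Finset.mem_insert.mp hb with rfl | hb'
    · simp [Equiv.Perm.mul_apply, Equiv.swap_apply_left]
    · have h1 : π b = f b := hπ b hb'
      have hba : b ≠ a := fun e => ha (e ▸ hb')
      have h2 : π b ≠ π a := fun e => hba (π.injective e)
      have h3 : f b ≠ f a := fun e =>
        hba (hf (by simp [hb']) (by simp) e)
      simp only [Equiv.Perm.mul_apply, h1]
      exact Equiv.swap_apply_of_ne_of_ne (h1 ▸ h2) h3

/-- a product automorphism of a single GD scheme -/
def prodAut {l mm : ℕ} (π : Equiv.Perm (Fin l)) (τ : Fin l → Equiv.Perm (Fin mm)) :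
    Equiv.Perm (Fin l × Fin mm) where
  toFun u := (π u.1, τ u.1 u.2)
  invFun u := (π.symm u.1, (τ (π.symm u.1)).symm u.2)
  left_inv u := by simp
  right_inv u := by simp

lemma prodAut_cls {l mm : ℕ} (π : Equiv.Perm (Fin l)) (τ : Fin l → Equiv.Perm (Fin mm))
    (u v : Fin l × Fin mm) : cls (prodAut π τ u) (prodAut π τ v) = cls u v := by
  unfold cls prodAut
  simp only [Equiv.coe_fn_mk]
  have h1 : ((π u.1, τ u.1 u.2) : Fin l × Fin mm) = (π v.1, τ v.1 v.2) ↔ u = v := by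
    constructor
    · intro e
      have e1 : π u.1 = π v.1 := congrArg Prod.fst e
      have e1' : u.1 = v.1 := π.injective e1
      have e2 : τ u.1 u.2 = τ v.1 v.2 := congrArg Prod.snd e
      rw [e1'] at e2
      exact Prod.ext e1' ((τ v.1).injective e2)
    · rintro rfl; rfl
  have h2 : π u.1 = π v.1 ↔ u.1 = v.1 := ⟨fun e => π.injective e, fun e => by rw [e]⟩
  split_ifs with a1 a2 b1 b2 b3 <;> first
    | rfl
    | (exact absurd (h1.mp a1) b1)
    | (exact absurd (h1.mpr b1) a1)
    | (exact absurd (h2.mp a2) b2)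
    | (exact absurd (h2.mpr b3) a2)
    | skip
  all_goals simp_all

end Aux4
section Aux5

lemma cls_facts {l mm : ℕ} {u v u' v' : Fin l × Fin mm} (h : cls u v = cls u' v') :
    (u = v ↔ u' = v') ∧ (u.1 = v.1 ↔ u'.1 = v'.1) ∧
      (u.1 = v.1 → (u.2 = v.2 ↔ u'.2 = v'.2)) := by
  rcases fin3 (cls u v) with h0 | h0 | h0 <;> rw [h0] at h <;> symm at h
  · have e1 := cls_eq_zero.mp h0
    have e2 := cls_eq_zero.mp h
    subst e1; subst e2
    simp
  · obtain ⟨e1, e2⟩ := cls_eq_one.mp h0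
    obtain ⟨e3, e4⟩ := cls_eq_one.mp h
    refine ⟨⟨fun e => absurd e e1, fun e => absurd e e3⟩, ⟨fun _ => e4, fun _ => e2⟩, fun _ => ?_⟩
    exact ⟨fun e => absurd (Prod.ext e2 e) e1, fun e => absurd (Prod.ext e4 e) e3⟩
  · have e1 := cls_eq_two.mp h0
    have e2 := cls_eq_two.mp h
    exact ⟨⟨fun e => absurd (congrArg Prod.fst e) e1, fun e => absurd (congrArg Prod.fst e) e2⟩,
      ⟨fun e => absurd e e1, fun e => absurd e e2⟩, fun e => absurd e e1⟩

set_option maxHeartbeats 1000000 in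
lemma exists_aut {l mm : ℕ} (x y z y' z' : Fin l × Fin mm)
    (h1 : cls x y = cls x y') (h2 : cls x z = cls x z') (h3 : cls y z = cls y' z') :
    ∃ σ : Equiv.Perm (Fin l × Fin mm),
      (∀ u v, cls (σ u) (σ v) = cls u v) ∧ σ x = x ∧ σ y = y' ∧ σ z = z' := by
  classical
  obtain ⟨exy, fxy, sxy⟩ := cls_facts h1
  obtain ⟨exz, fxz, sxz⟩ := cls_facts h2
  obtain ⟨eyz, fyz, syz⟩ := cls_facts h3
  -- the permutation of the groups
  set f1 : Fin l → Fin l := fun a =>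
    if a = x.1 then x.1 else if a = y.1 then y'.1 else if a = z.1 then z'.1 else a with hf1
  have hfx : f1 x.1 = x.1 := by simp [hf1]
  have hfy : f1 y.1 = y'.1 := by
    by_cases hxy : y.1 = x.1
    · simp only [hf1, if_pos hxy]
      exact fxy.mp hxy.symm
    · simp [hf1, hxy]
  have hfz : f1 z.1 = z'.1 := by
    by_cases hzx : z.1 = x.1
    · simp only [hf1, if_pos hzx]
      exact fxz.mp hzx.symm
    · by_cases hzy : z.1 = y.1
      · simp only [hf1, if_neg hzx, if_pos hzy]
        exact fyz.mp hzy.symm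
      · simp [hf1, hzx, hzy]
  have hinj1 : Set.InjOn f1 ({x.1, y.1, z.1} : Finset (Fin l)) := by
    intro p hp q hq e
    simp only [Finset.coe_insert, Finset.coe_singleton, Set.mem_insert_iff,
      Set.mem_singleton_iff] at hp hq
    rcases hp with rfl | rfl | rfl <;> rcases hq with rfl | rfl | rfl
    · rfl
    · rw [hfx, hfy] at e; exact fxy.mpr e
    · rw [hfx, hfz] at e; exact fxz.mpr e
    · rw [hfy, hfx] at e; exact (fxy.mpr e.symm).symm
    · rfl
    · rw [hfy, hfz] at e; exact fyz.mpr e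
    · rw [hfz, hfx] at e; exact (fxz.mpr e.symm).symm
    · rw [hfz, hfy] at e; exact (fyz.mpr e.symm).symm
    · rfl
  obtain ⟨π, hπ⟩ := exists_perm_extend _ f1 hinj1
  have hπx : π x.1 = x.1 := (hπ _ (by simp)).trans hfx
  have hπy : π y.1 = y'.1 := (hπ _ (by simp)).trans hfy
  have hπz : π z.1 = z'.1 := (hπ _ (by simp)).trans hfz
  -- the permutations within each group
  have hτ : ∀ a : Fin l, ∃ τa : Equiv.Perm (Fin mm),
      (a = x.1 → τa x.2 = x.2) ∧ (a = y.1 → τa y.2 = y'.2) ∧ (a = z.1 → τa z.2 = z'.2) := by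
    intro a
    set g : Fin mm → Fin mm := fun b =>
      if a = y.1 ∧ b = y.2 then y'.2 else if a = z.1 ∧ b = z.2 then z'.2 else b with hg
    set s2 : Finset (Fin mm) :=
      Finset.univ.filter (fun b => (a = x.1 ∧ b = x.2) ∨ (a = y.1 ∧ b = y.2) ∨
        (a = z.1 ∧ b = z.2)) with hs2
    have mem2 : ∀ b, b ∈ s2 ↔ (a = x.1 ∧ b = x.2) ∨ (a = y.1 ∧ b = y.2) ∨
        (a = z.1 ∧ b = z.2) := by
      intro b
      simp only [hs2, Finset.mem_filter, Finset.mem_univ, true_and]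
    have gx : a = x.1 → g x.2 = x.2 := by
      intro hax
      by_cases b1 : a = y.1 ∧ x.2 = y.2
      · simp only [hg, if_pos b1]
        have hxy1 : x.1 = y.1 := hax.symm.trans b1.1
        have : x = y := Prod.ext hxy1 b1.2
        have : x = y' := exy.mp this
        exact (congrArg Prod.snd this).symm
      · by_cases b2 : a = z.1 ∧ x.2 = z.2
        · simp only [hg, if_neg b1, if_pos b2]
          have hxz1 : x.1 = z.1 := hax.symm.trans b2.1
          have : x = z := Prod.ext hxz1 b2.2
          have : x = z' := exz.mp this
          exact (congrArg Prod.snd this).symm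
        · simp [hg, b1, b2]
    have gy : a = y.1 → g y.2 = y'.2 := by
      intro hay
      simp [hg, hay]
    have gz : a = z.1 → g z.2 = z'.2 := by
      intro haz
      by_cases b1 : a = y.1 ∧ z.2 = y.2
      · simp only [hg, if_pos b1]
        have hyz1 : y.1 = z.1 := b1.1.symm.trans haz
        have : y = z := Prod.ext hyz1 b1.2.symm
        have : y' = z' := eyz.mp this
        exact (congrArg Prod.snd this)
      · have hcond : a = z.1 ∧ z.2 = z.2 := ⟨haz, rfl⟩
        simp only [hg]
        rw [if_neg b1]
        simp [haz]
    have hinj2 : Set.InjOn g s2 := by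
      intro p hp q hq e
      rw [Finset.mem_coe, mem2] at hp hq
      rcases hp with ⟨ha, rfl⟩ | ⟨ha, rfl⟩ | ⟨ha, rfl⟩ <;>
        rcases hq with ⟨hb, rfl⟩ | ⟨hb, rfl⟩ | ⟨hb, rfl⟩
      · rfl
      · rw [gx ha, gy hb] at e
        exact (sxy (ha.symm.trans hb)).mpr e
      · rw [gx ha, gz hb] at e
        exact (sxz (ha.symm.trans hb)).mpr e
      · rw [gy ha, gx hb] at e
        exact ((sxy (hb.symm.trans ha)).mpr e.symm).symm
      · rfl
      · rw [gy ha, gz hb] at e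
        exact (syz (ha.symm.trans hb)).mpr e
      · rw [gz ha, gx hb] at e
        exact ((sxz (hb.symm.trans ha)).mpr e.symm).symm
      · rw [gz ha, gy hb] at e
        exact ((syz (hb.symm.trans ha)).mpr e.symm).symm
      · rfl
    obtain ⟨τa, hτa⟩ := exists_perm_extend s2 g hinj2
    refine ⟨τa, fun ha => ?_, fun ha => ?_, fun ha => ?_⟩
    · rw [hτa _ ((mem2 _).mpr (Or.inl ⟨ha, rfl⟩))]; exact gx ha
    · rw [hτa _ ((mem2 _).mpr (Or.inr (Or.inl ⟨ha, rfl⟩)))]; exact gy ha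
    · rw [hτa _ ((mem2 _).mpr (Or.inr (Or.inr ⟨ha, rfl⟩)))]; exact gz ha
  choose τ hτ1 hτ2 hτ3 using hτ
  refine ⟨prodAut π τ, prodAut_cls π τ, ?_, ?_, ?_⟩
  · exact Prod.ext hπx (hτ1 x.1 rfl)
  · exact Prod.ext hπy (hτ2 y.1 rfl)
  · exact Prod.ext hπz (hτ3 z.1 rfl)

end Aux5
section Aux6
variable {n : ℕ} {ℓ m : Fin n → ℕ}

/-- the set of `w` forming a triangle-completion -/
noncomputable def Wfil (x y z : Pt ℓ m) (h i j : Lbl n) : Finset (Pt ℓ m) :=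
  Finset.univ.filter fun w => relOf x w = h ∧ relOf y w = i ∧ relOf w z = j

lemma Wfil_card_eq (x y z y' z' : Pt ℓ m) (h i j : Lbl n)
    (e1 : relOf x y = relOf x y') (e2 : relOf x z = relOf x z')
    (e3 : relOf y z = relOf y' z') :
    (Wfil x y z h i j).card = (Wfil x y' z' h i j).card := by
  classical
  have hσ : ∀ a, ∃ σ : Equiv.Perm (Fin (ℓ a) × Fin (m a)),
      (∀ u v, cls (σ u) (σ v) = cls u v) ∧ σ (x a) = x a ∧ σ (y a) = y' a ∧ σ (z a) = z' a :=
    fun a => exists_aut (x a) (y a) (z a) (y' a) (z' a)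
      (congrFun e1 a) (congrFun e2 a) (congrFun e3 a)
  choose σ hcls hx hy hz using hσ
  have hcls' : ∀ (a) (u v : Fin (ℓ a) × Fin (m a)),
      cls ((σ a).symm u) ((σ a).symm v) = cls u v := by
    intro a u v
    have := hcls a ((σ a).symm u) ((σ a).symm v)
    simpa using this.symm
  have hx' : ∀ a, (σ a).symm (x a) = x a := fun a =>
    (Equiv.symm_apply_eq _).mpr (hx a).symm
  have hy' : ∀ a, (σ a).symm (y' a) = y a := fun a =>
    (Equiv.symm_apply_eq _).mpr (hy a).symm
  have hz' : ∀ a, (σ a).symm (z' a) = z a := fun a =>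
    (Equiv.symm_apply_eq _).mpr (hz a).symm
  apply Finset.card_bij' (fun w _ => fun a => σ a (w a)) (fun w _ => fun a => (σ a).symm (w a))
  · intro w hw
    rw [Wfil, Finset.mem_filter] at hw ⊢
    obtain ⟨-, c1, c2, c3⟩ := hw
    refine ⟨Finset.mem_univ _, funext fun a => ?_, funext fun a => ?_, funext fun a => ?_⟩
    · rw [relOf]; rw [← hx a, hcls a]; exact congrFun c1 a
    · rw [relOf]; rw [← hy a, hcls a]; exact congrFun c2 a
    · rw [relOf]; rw [← hz a, hcls a]; exact congrFun c3 a
  · intro w hw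
    rw [Wfil, Finset.mem_filter] at hw ⊢
    obtain ⟨-, c1, c2, c3⟩ := hw
    refine ⟨Finset.mem_univ _, funext fun a => ?_, funext fun a => ?_, funext fun a => ?_⟩
    · rw [relOf]; rw [← hx' a, hcls' a]; exact congrFun c1 a
    · rw [relOf]; rw [← hy' a, hcls' a]; exact congrFun c2 a
    · rw [relOf]; rw [← hz' a, hcls' a]; exact congrFun c3 a
  · intro w _; funext a; simp
  · intro w _; funext a; simp

end Aux6
section Aux7
variable {n : ℕ} {ℓ m : Fin n → ℕ} {F : Type} [Field F]

/-- the triple product generators -/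
noncomputable def gen (F : Type) [Field F] (ℓ m : Fin n → ℕ) (x : Pt ℓ m)
    (t : Lbl n × Lbl n × Lbl n) : Matrix (Pt ℓ m) (Pt ℓ m) F :=
  Estar F ℓ m x t.1 * Amat F ℓ m t.2.2 * Estar F ℓ m x t.2.1

lemma gen_apply (x : Pt ℓ m) (t : Lbl n × Lbl n × Lbl n) (y z : Pt ℓ m) :
    gen F ℓ m x t y z =
      if relOf x y = t.1 ∧ relOf y z = t.2.2 ∧ relOf x z = t.2.1 then 1 else 0 :=
  entry_eq x t.1 t.2.1 t.2.2 y z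

lemma Estar_apply (x : Pt ℓ m) (g : Lbl n) (y z : Pt ℓ m) :
    Estar F ℓ m x g y z = if y = z ∧ relOf x y = g then 1 else 0 := by
  unfold Estar
  rcases eq_or_ne y z with rfl | hyz
  · rw [Matrix.diagonal_apply_eq]
    simp [Rel_iff]
  · rw [Matrix.diagonal_apply_ne _ hyz]
    simp [hyz]

lemma Estar_mul_self (x : Pt ℓ m) (g : Lbl n) :
    (Estar F ℓ m x g : Matrix (Pt ℓ m) (Pt ℓ m) F) * Estar F ℓ m x g = Estar F ℓ m x g := by
  unfold Estar
  rw [Matrix.diagonal_mul_diagonal]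
  have : (fun y => (if Rel ℓ m g x y then (1 : F) else 0) * (if Rel ℓ m g x y then 1 else 0))
      = fun y => if Rel ℓ m g x y then (1 : F) else 0 := by
    funext y; split_ifs <;> simp
  rw [this]

lemma Estar_mul_ne (x : Pt ℓ m) {g h : Lbl n} (hgh : g ≠ h) :
    (Estar F ℓ m x g : Matrix (Pt ℓ m) (Pt ℓ m) F) * Estar F ℓ m x h = 0 := by
  unfold Estar
  rw [Matrix.diagonal_mul_diagonal]
  have : (fun y => (if Rel ℓ m g x y then (1 : F) else 0) * (if Rel ℓ m h x y then 1 else 0))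
      = fun _ => 0 := by
    funext y
    simp only [Rel_iff]
    split_ifs with h1 h2
    · exact absurd (h1.symm.trans h2) hgh
    · simp
    · simp
    · simp
  rw [this, Matrix.diagonal_zero]

lemma sum_Estar (x : Pt ℓ m) : ∑ g : Lbl n, (Estar F ℓ m x g : Matrix (Pt ℓ m) (Pt ℓ m) F) = 1 := by
  ext y z
  rw [Matrix.sum_apply]
  simp only [Estar_apply]
  rcases eq_or_ne y z with rfl | hyz
  · rw [Matrix.one_apply_eq]
    simp only [true_and]
    rw [Finset.sum_ite_eq Finset.univ (relOf x y) (fun _ => (1 : F))]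
    simp
  · rw [Matrix.one_apply_ne hyz]
    simp [hyz]

lemma Amat_zero : (Amat F ℓ m (fun _ => 0) : Matrix (Pt ℓ m) (Pt ℓ m) F) = 1 := by
  ext y z
  unfold Amat
  rw [Rel_iff]
  have : (relOf y z = fun _ => (0 : Fin 3)) ↔ y = z := by
    constructor
    · intro h
      funext a
      exact cls_eq_zero.mp (congrFun h a)
    · rintro rfl
      funext a
      exact cls_self (y a)
  rw [this]
  rcases eq_or_ne y z with rfl | hyz
  · simp
  · simp [hyz, Matrix.one_apply_ne hyz]

lemma Estar_eq_gen (x : Pt ℓ m) (g : Lbl n) :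
    (Estar F ℓ m x g : Matrix (Pt ℓ m) (Pt ℓ m) F) = gen F ℓ m x (g, g, fun _ => 0) := by
  unfold gen
  simp only
  rw [Amat_zero, mul_one, Estar_mul_self]

lemma Amat_eq_sum_gen (x : Pt ℓ m) (i : Lbl n) :
    (Amat F ℓ m i : Matrix (Pt ℓ m) (Pt ℓ m) F)
      = ∑ p : Lbl n × Lbl n, gen F ℓ m x (p.1, p.2, i) := by
  rw [Fintype.sum_prod_type]
  unfold gen
  simp only
  have : ∀ g : Lbl n, ∑ h : Lbl n, Estar F ℓ m x g * Amat F ℓ m i * Estar F ℓ m x h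
      = Estar F ℓ m x g * Amat F ℓ m i := by
    intro g
    rw [← Finset.mul_sum, sum_Estar, mul_one]
  rw [Finset.sum_congr rfl (fun g _ => this g), ← Finset.sum_mul, sum_Estar, one_mul]

end Aux7
section Aux8
variable {n : ℕ} {ℓ m : Fin n → ℕ} {F : Type} [Field F]

lemma ite_mul_ite_zero {P Q : Prop} [Decidable P] [Decidable Q] :
    (if P then (1 : F) else 0) * (if Q then (1 : F) else 0) = if P ∧ Q then 1 else 0 := by
  split_ifs <;> simp_all

/-- the span of the triple products -/
noncomputable def Smod (F : Type) [Field F] (ℓ m : Fin n → ℕ) (x : Pt ℓ m) :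
    Submodule F (Matrix (Pt ℓ m) (Pt ℓ m) F) :=
  Submodule.span F (Set.range (gen F ℓ m x))

lemma gen_mem_Smod (x : Pt ℓ m) (t : Lbl n × Lbl n × Lbl n) :
    gen F ℓ m x t ∈ Smod F ℓ m x :=
  Submodule.subset_span ⟨t, rfl⟩

lemma gen_mul_gen (x : Pt ℓ m) (t t' : Lbl n × Lbl n × Lbl n) :
    gen F ℓ m x t * gen F ℓ m x t' ∈ Smod F ℓ m x := by
  classical
  obtain ⟨g, h, i⟩ := t
  obtain ⟨g', h', j⟩ := t'
  by_cases hgh : g' = h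
  swap
  · -- the product is zero
    have hz : gen F ℓ m x (g, h, i) * gen F ℓ m x (g', h', j) = 0 := by
      ext y z
      rw [Matrix.mul_apply]
      rw [show (0 : Matrix (Pt ℓ m) (Pt ℓ m) F) y z = 0 from rfl]
      apply Finset.sum_eq_zero
      intro w _
      rw [gen_apply, gen_apply, ite_mul_ite_zero]
      rw [if_neg]
      rintro ⟨⟨-, -, c1⟩, ⟨c2, -, -⟩⟩
      exact hgh (c2.symm.trans c1)
    rw [hz]
    exact Submodule.zero_mem _
  subst hgh
  set c : Lbl n → F := fun a =>
    if H : ∃ p : Pt ℓ m × Pt ℓ m, relOf x p.1 = g ∧ relOf x p.2 = h' ∧ relOf p.1 p.2 = a then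
      ((Wfil x H.choose.1 H.choose.2 g' i j).card : F)
    else 0 with hc
  have key : gen F ℓ m x (g, g', i) * gen F ℓ m x (g', h', j)
      = ∑ a : Lbl n, c a • gen F ℓ m x (g, h', a) := by
    ext y z
    rw [Matrix.mul_apply, Matrix.sum_apply]
    have lhs_eq : ∀ w : Pt ℓ m, gen F ℓ m x (g, g', i) y w * gen F ℓ m x (g', h', j) w z
        = if (relOf x y = g ∧ relOf x z = h') ∧
            (relOf x w = g' ∧ relOf y w = i ∧ relOf w z = j) then (1 : F) else 0 := by
      intro w
      rw [gen_apply, gen_apply, ite_mul_ite_zero]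
      exact if_congr (by tauto) rfl rfl
    rw [Finset.sum_congr rfl fun w _ => lhs_eq w]
    by_cases ho : relOf x y = g ∧ relOf x z = h'
    · simp only [ho, true_and]
      rw [Finset.sum_boole]
      have rhs_eq : ∀ a : Lbl n, c a * (if relOf x y = (g, h', a).1 ∧ relOf y z = (g, h', a).2.2
          ∧ relOf x z = (g, h', a).2.1 then (1 : F) else 0)
          = if relOf y z = a then c a else 0 := by
        intro a
        simp only
        have e1 : (if relOf x y = g ∧ relOf y z = a ∧ relOf x z = h' then (1 : F) else 0)
            = if relOf y z = a then (1 : F) else 0 := if_congr (by tauto) rfl rfl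
        rw [e1, mul_ite, mul_one, mul_zero]
      rw [Finset.sum_congr rfl fun a _ => by rw [Matrix.smul_apply, gen_apply, smul_eq_mul,
        rhs_eq a]]
      rw [Finset.sum_ite_eq Finset.univ (relOf y z) c]
      rw [if_pos (Finset.mem_univ _)]
      -- evaluate c at relOf y z
      have H : ∃ p : Pt ℓ m × Pt ℓ m, relOf x p.1 = g ∧ relOf x p.2 = h' ∧
          relOf p.1 p.2 = relOf y z := ⟨(y, z), ho.1, ho.2, rfl⟩
      rw [hc]
      simp only
      rw [dif_pos H]
      obtain ⟨s1, s2, s3⟩ := H.choose_spec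
      have := Wfil_card_eq x H.choose.1 H.choose.2 y z g' i j
        (s1.trans ho.1.symm) (s2.trans ho.2.symm) s3
      rw [this]
      rfl
    · rw [Finset.sum_eq_zero fun w _ => by rw [if_neg (fun hh => ho hh.1)]]
      symm
      apply Finset.sum_eq_zero
      intro a _
      rw [Matrix.smul_apply, gen_apply, smul_eq_mul]
      rw [if_neg (fun hh => ho ⟨hh.1, hh.2.2⟩), mul_zero]
  rw [key]
  exact Submodule.sum_mem _ fun a _ =>
    Submodule.smul_mem _ _ (gen_mem_Smod x (g, h', a))

end Aux8
section Aux9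
variable {n : ℕ} {ℓ m : Fin n → ℕ} {F : Type} [Field F]

lemma one_mem_Smod (x : Pt ℓ m) : (1 : Matrix (Pt ℓ m) (Pt ℓ m) F) ∈ Smod F ℓ m x := by
  rw [← Amat_zero (F := F) (ℓ := ℓ) (m := m), Amat_eq_sum_gen x]
  exact Submodule.sum_mem _ fun p _ => gen_mem_Smod x _

lemma Smod_mul_le (x : Pt ℓ m) :
    ∀ M ∈ Smod F ℓ m x, ∀ N ∈ Smod F ℓ m x, M * N ∈ Smod F ℓ m x := by
  have h1 : Smod F ℓ m x * Smod F ℓ m x ≤ Smod F ℓ m x := by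
    rw [Smod, Submodule.span_mul_span, Submodule.span_le]
    rintro z ⟨p, ⟨t, rfl⟩, q, ⟨t', rfl⟩, rfl⟩
    exact gen_mul_gen x t t'
  intro M hM N hN
  exact h1 (Submodule.mul_mem_mul hM hN)

lemma Talg_le_Smod (x : Pt ℓ m) : ∀ M ∈ Talg F ℓ m x, M ∈ Smod F ℓ m x := fun M hM =>
  Algebra.adjoin_induction
    (fun N hN => by
      rcases hN with ⟨i, rfl⟩ | ⟨g, rfl⟩
      · rw [Amat_eq_sum_gen x]
        exact Submodule.sum_mem _ fun p _ => gen_mem_Smod x _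
      · rw [Estar_eq_gen x]
        exact gen_mem_Smod x _)
    (fun r => by
      rw [Algebra.algebraMap_eq_smul_one]
      exact Submodule.smul_mem _ _ (one_mem_Smod x))
    (fun a b _ _ iha ihb => Submodule.add_mem _ iha ihb)
    (fun a b _ _ iha ihb => Smod_mul_le x a iha b ihb)
    hM

lemma gen_mem_Talg (x : Pt ℓ m) (t : Lbl n × Lbl n × Lbl n) :
    gen F ℓ m x t ∈ Talg F ℓ m x :=
  mul_mem (mul_mem (Algebra.subset_adjoin (Or.inr ⟨t.1, rfl⟩))
    (Algebra.subset_adjoin (Or.inl ⟨t.2.2, rfl⟩)))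
    (Algebra.subset_adjoin (Or.inr ⟨t.2.1, rfl⟩))

lemma gen_eq_zero (hℓ : ∀ a, 2 ≤ ℓ a) (hm : ∀ a, 2 ≤ m a) (x : Pt ℓ m)
    {t : Lbl n × Lbl n × Lbl n} (hP : ¬ MemP ℓ m t.1 t.2.1 t.2.2) :
    gen F ℓ m x t = 0 := by
  ext y z
  rw [gen_apply, if_neg, show (0 : Matrix (Pt ℓ m) (Pt ℓ m) F) y z = 0 from rfl]
  rintro ⟨e1, e2, e3⟩
  exact hP ((memP_iff_exists hℓ hm x).mpr ⟨y, z, e1, e3, e2⟩)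

end Aux9

/-- The family `(E*_g A_i E*_h)` indexed by the triples `(g,h,i) ∈ P` is linearly
independent over `F` and spans `T`; in particular `dim_F T = |P|`. -/
theorem statement1 (F : Type) [Field F] (n : ℕ) (hn : 1 ≤ n) (ℓ m : Fin n → ℕ)
    (hℓ : ∀ i, 2 ≤ ℓ i) (hm : ∀ i, 2 ≤ m i) (x : Pt ℓ m) :
    LinearIndependent F
      (fun t : {t : Lbl n × Lbl n × Lbl n // MemP ℓ m t.1 t.2.1 t.2.2} =>
        Estar F ℓ m x t.1.1 * Amat F ℓ m t.1.2.2 * Estar F ℓ m x t.1.2.1) ∧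
    Submodule.span F
      (Set.range fun t : {t : Lbl n × Lbl n × Lbl n // MemP ℓ m t.1 t.2.1 t.2.2} =>
        Estar F ℓ m x t.1.1 * Amat F ℓ m t.1.2.2 * Estar F ℓ m x t.1.2.1) =
      Subalgebra.toSubmodule (Talg F ℓ m x) ∧
    Module.finrank F ↥(Talg F ℓ m x) =
      Nat.card {t : Lbl n × Lbl n × Lbl n // MemP ℓ m t.1 t.2.1 t.2.2} := by
  classical
  have hfun : (fun t : {t : Lbl n × Lbl n × Lbl n // MemP ℓ m t.1 t.2.1 t.2.2} =>
      Estar F ℓ m x t.1.1 * Amat F ℓ m t.1.2.2 * Estar F ℓ m x t.1.2.1)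
      = fun t : {t : Lbl n × Lbl n × Lbl n // MemP ℓ m t.1 t.2.1 t.2.2} =>
        gen F ℓ m x t.1 := rfl
  have hLI : LinearIndependent F
      (fun t : {t : Lbl n × Lbl n × Lbl n // MemP ℓ m t.1 t.2.1 t.2.2} =>
        gen F ℓ m x t.1) := by
    rw [Fintype.linearIndependent_iff]
    intro cf hsum t
    obtain ⟨y, z, e1, e2, e3⟩ := (memP_iff_exists hℓ hm x).mp t.2
    have h0 := congrFun (congrFun hsum y) z
    rw [Matrix.sum_apply] at h0
    rw [show (0 : Matrix (Pt ℓ m) (Pt ℓ m) F) y z = 0 from rfl] at h0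
    rw [Finset.sum_congr rfl (fun t' (_ : t' ∈ Finset.univ) => by
      rw [Matrix.smul_apply, gen_apply, smul_eq_mul])] at h0
    rw [Finset.sum_eq_single t (fun t' _ ht' => by
        rw [if_neg, mul_zero]
        rintro ⟨f1, f2, f3⟩
        apply ht'
        apply Subtype.ext
        have : t'.1 = t.1 := by
          apply Prod.ext
          · exact f1.symm.trans e1
          · apply Prod.ext
            · exact f3.symm.trans e2
            · exact f2.symm.trans e3
        exact this)
      (fun ht => absurd (Finset.mem_univ t) ht)] at h0
    rw [if_pos ⟨e1, e3, e2⟩, mul_one] at h0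
    exact h0
  have hspan : Submodule.span F
      (Set.range fun t : {t : Lbl n × Lbl n × Lbl n // MemP ℓ m t.1 t.2.1 t.2.2} =>
        gen F ℓ m x t.1) = Subalgebra.toSubmodule (Talg F ℓ m x) := by
    apply le_antisymm
    · rw [Submodule.span_le]
      rintro M ⟨t, rfl⟩
      rw [SetLike.mem_coe, Subalgebra.mem_toSubmodule]
      exact gen_mem_Talg x t.1
    · intro M hM
      rw [Subalgebra.mem_toSubmodule] at hM
      have h1 : M ∈ Smod F ℓ m x := Talg_le_Smod x M hM
      have h2 : Smod F ℓ m x ≤ Submodule.span F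
          (Set.range fun t : {t : Lbl n × Lbl n × Lbl n // MemP ℓ m t.1 t.2.1 t.2.2} =>
            gen F ℓ m x t.1) := by
        rw [Smod, Submodule.span_le]
        rintro N ⟨t, rfl⟩
        by_cases hP : MemP ℓ m t.1 t.2.1 t.2.2
        · exact Submodule.subset_span ⟨⟨t, hP⟩, rfl⟩
        · rw [gen_eq_zero hℓ hm x hP]
          exact Submodule.zero_mem _
      exact h2 h1
  have h3 := finrank_span_eq_card hLI
  rw [hspan] at h3
  rw [hfun]
  refine ⟨hLI, hspan, ?_⟩
  rw [Nat.card_eq_fintype_card, ← h3]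
  rfl
end GDScheme
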